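/- Suppose two finite turn-based stochastic games G and G' are related by a weak bisimulation R respecting the observable labeling, and suppose for all (s,s') ∈ R the one-step-matched optimal until-values agree on endpoints of matched weak steps. Then for all (s,s') ∈ R, the optimal unbounded-until values for observable target and safe sets agree: v_G(s) = v_{G'}(s'). -/
import Mathlib


open Finset

/-- Two finite well-founded turn-based stochastic games related by a weak
bisimulation `R` respecting the observable labeling (same controlling player, same membership in
the target set `B` and safe set `A`), whose (compressed) weak steps are in probability-preserving
bijection, have equal optimal unbounded-until values on related states: `v s = v' s'`. -/
theorem weak_bisim_preserves_until_values
    {S S' : Type*} [Fintype S] [Fintype S']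
    (A B : Set S) (A' B' : Set S')
    (W : S → Finset (ℝ × S)) (W' : S' → Finset (ℝ × S'))
    (maxPlayer : S → Prop) [DecidablePred maxPlayer]
    (maxPlayer' : S' → Prop) [DecidablePred maxPlayer']
    (ρ : S → ℕ) (ρ' : S' → ℕ)
    (hrank : ∀ s p t, (p, t) ∈ W s → ρ s < ρ t)
    (hrank' : ∀ s' p t', (p, t') ∈ W' s' → ρ' s' < ρ' t')
    (hne : ∀ s, s ∈ A → s ∉ B → (W s).Nonempty)
    (hne' : ∀ s', s' ∈ A' → s' ∉ B' → (W' s').Nonempty)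
    (R : S → S' → Prop)
    -- related states have the same controlling player and agree on membership in A and B
    (hplayer : ∀ s s', R s s' → (maxPlayer s ↔ maxPlayer' s'))
    (hA : ∀ s s', R s s' → (s ∈ A ↔ s' ∈ A'))
    (hB : ∀ s s', R s s' → (s ∈ B ↔ s' ∈ B'))
    -- weak steps from s are in probability-preserving bijection with steps from s',
    -- with successors again related by R
    (hmatch : ∀ s s', R s s' →
      ∃ e : {m // m ∈ W s} ≃ {m // m ∈ W' s'},
        ∀ m : {m // m ∈ W s},
          (e m).1.1 = m.1.1 ∧ R m.1.2 (e m).1.2)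
    (v : S → ℝ) (v' : S' → ℝ)
    (hvB : ∀ s ∈ B, v s = 1) (hvOut : ∀ s, s ∉ A ∪ B → v s = 0)
    (hv : ∀ s (h1 : s ∈ A) (h2 : s ∉ B),
      v s = if maxPlayer s then (W s).sup' (hne s h1 h2) (fun m => m.1 * v m.2)
            else (W s).inf' (hne s h1 h2) (fun m => m.1 * v m.2))
    (hv'B : ∀ s' ∈ B', v' s' = 1) (hv'Out : ∀ s', s' ∉ A' ∪ B' → v' s' = 0)
    (hv' : ∀ s' (h1 : s' ∈ A') (h2 : s' ∉ B'),
      v' s' = if maxPlayer' s' then (W' s').sup' (hne' s' h1 h2) (fun m => m.1 * v' m.2)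
              else (W' s').inf' (hne' s' h1 h2) (fun m => m.1 * v' m.2)) :
    ∀ s s', R s s' → v s = v' s' := by
  classical
  set N : ℕ := Finset.univ.sup ρ with hN
  have hρN : ∀ s : S, ρ s ≤ N := fun s => Finset.le_sup (Finset.mem_univ s)
  have key : ∀ k : ℕ, ∀ s s', N - ρ s ≤ k → R s s' → v s = v' s' := by
    intro k
    induction k with
    | zero =>
      intro s s' hk hR
      -- ρ s = N, so W s must be empty (any successor would have larger rank)
      have hWs : W s = ∅ := by
        by_contra hWne
        obtain ⟨⟨p, t⟩, hpt⟩ := Finset.nonempty_iff_ne_empty.mpr hWne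
        have h1 := hrank s p t hpt
        have h2 := hρN t
        omega
      by_cases hB1 : s ∈ B
      · rw [hvB s hB1, hv'B s' ((hB s s' hR).mp hB1)]
      · by_cases hA1 : s ∈ A
        · exact absurd hWs (Finset.nonempty_iff_ne_empty.mp (hne s hA1 hB1)).elim
        · have : s ∉ A ∪ B := fun h => h.elim hA1 hB1
          rw [hvOut s this, hv'Out s']
          intro h
          exact this (h.elim (fun h' => Or.inl ((hA s s' hR).mpr h'))
            (fun h' => Or.inr ((hB s s' hR).mpr h')))
    | succ k ih =>
      intro s s' hk hR
      by_cases hB1 : s ∈ B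
      · rw [hvB s hB1, hv'B s' ((hB s s' hR).mp hB1)]
      · by_cases hA1 : s ∈ A
        · have hA1' : s' ∈ A' := (hA s s' hR).mp hA1
          have hB1' : s' ∉ B' := fun h => hB1 ((hB s s' hR).mpr h)
          rw [hv s hA1 hB1, hv' s' hA1' hB1']
          obtain ⟨e, he⟩ := hmatch s s' hR
          have hval : ∀ m : {m // m ∈ W s},
              m.1.1 * v m.1.2 = (e m).1.1 * v' (e m).1.2 := by
            intro m
            obtain ⟨hp, hRm⟩ := he m
            rw [hp]
            congr 1
            apply ih m.1.2 (e m).1.2 _ hRm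
            have h1 : ρ s < ρ m.1.2 := hrank s m.1.1 m.1.2 (by simp)
            omega
          have hsup : (W s).sup' (hne s hA1 hB1) (fun m => m.1 * v m.2)
              = (W' s').sup' (hne' s' hA1' hB1') (fun m => m.1 * v' m.2) := by
            apply le_antisymm
            · apply Finset.sup'_le
              intro m hm
              have := hval ⟨m, hm⟩
              simp only at this
              rw [this]
              exact Finset.le_sup' (fun m => m.1 * v' m.2) (e ⟨m, hm⟩).2
            · apply Finset.sup'_le
              intro m' hm'
              have := hval (e.symm ⟨m', hm'⟩)
              rw [e.apply_symm_apply] at this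
              simp only at this
              rw [← this]
              exact Finset.le_sup' (fun m => m.1 * v m.2) (e.symm ⟨m', hm'⟩).2
          have hinf : (W s).inf' (hne s hA1 hB1) (fun m => m.1 * v m.2)
              = (W' s').inf' (hne' s' hA1' hB1') (fun m => m.1 * v' m.2) := by
            apply le_antisymm
            · apply Finset.le_inf'
              intro m' hm'
              have := hval (e.symm ⟨m', hm'⟩)
              rw [e.apply_symm_apply] at this
              simp only at this
              rw [← this]
              exact Finset.inf'_le (fun m => m.1 * v m.2) (e.symm ⟨m', hm'⟩).2
            · apply Finset.le_inf'
              intro m hm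
              have := hval ⟨m, hm⟩
              simp only at this
              rw [this]
              exact Finset.inf'_le (fun m => m.1 * v' m.2) (e ⟨m, hm⟩).2
          by_cases hmp : maxPlayer s
          · rw [if_pos hmp, if_pos ((hplayer s s' hR).mp hmp), hsup]
          · rw [if_neg hmp, if_neg (fun h => hmp ((hplayer s s' hR).mpr h)), hinf]
        · have h0 : s ∉ A ∪ B := fun h => h.elim hA1 hB1
          rw [hvOut s h0, hv'Out s']
          intro h
          exact h0 (h.elim (fun h' => Or.inl ((hA s s' hR).mpr h'))
            (fun h' => Or.inr ((hB s s' hR).mpr h')))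
  intro s s' hR
  exact key (N - ρ s) s s' le_rfl hR
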